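/- Let G be a subgraph of the complete bipartite graph K_{7,30} with parts X (of size 7) and Y (of size 30) such that G contains no copy of K_{2,2} and Δ(G_X) = 7, and let B = {x ∈ X : deg_G(x) = 7}. If |B| = 2, then the bipartite complement of G contains a copy of K_{5,5}. -/

import Mathlib

/-- A subgraph of the complete bipartite graph `K_{m,n}` is identified with its
edge set, a finset of pairs `(x, y)` with `x` in the part `X = Fin m` and
`y` in the part `Y = Fin n`.  `bContains s t E` says that the bipartite graph
with edge set `E` contains a copy of `K_{s,t}`: there are `s` distinct
vertices of `X` and `t` distinct vertices of `Y` with all pairs present. -/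
def bContains {m n : ℕ} (s t : ℕ) (E : Finset (Fin m × Fin n)) : Prop :=
  ∃ (A : Finset (Fin m)) (B : Finset (Fin n)),
    A.card = s ∧ B.card = t ∧ ∀ x ∈ A, ∀ y ∈ B, (x, y) ∈ E

/-- The bipartite complement: edge set `(X × Y) \ E`. -/
def bCompl {m n : ℕ} (E : Finset (Fin m × Fin n)) : Finset (Fin m × Fin n) :=
  Finset.univ \ E

/-- The neighborhood `N_G(x) ⊆ Y` of a vertex `x ∈ X`. -/
def bNbhd {m n : ℕ} (E : Finset (Fin m × Fin n)) (x : Fin m) : Finset (Fin n) :=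
  Finset.univ.filter (fun y => (x, y) ∈ E)

/-- The degree of a vertex `x ∈ X`. -/
def bDeg {m n : ℕ} (E : Finset (Fin m × Fin n)) (x : Fin m) : ℕ :=
  (bNbhd E x).card

/-- `Δ(G_X)`: the maximum degree over the vertices of the part `X`. -/
def bMaxDegX {m n : ℕ} (E : Finset (Fin m × Fin n)) : ℕ :=
  Finset.univ.sup (fun x => bDeg E x)

def dY (E : Finset (Fin 7 × Fin 30)) (y : Fin 30) : ℕ :=
  (Finset.univ.filter (fun x : Fin 7 => (x, y) ∈ E)).card

lemma hcount_aux (E : Finset (Fin 7 × Fin 30)) (y : Fin 30) :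
    Nat.choose (7 - dY E y) 5 =
      ((Finset.univ.powersetCard 5).filter
        (fun S : Finset (Fin 7) => ∀ x ∈ S, (x, y) ∉ E)).card := by
  have hEq : (Finset.univ.powersetCard 5).filter
      (fun S : Finset (Fin 7) => ∀ x ∈ S, (x, y) ∉ E)
      = (Finset.univ.filter (fun x : Fin 7 => (x, y) ∉ E)).powersetCard 5 := by
    ext S
    simp only [Finset.mem_filter, Finset.mem_powersetCard, Finset.subset_univ, true_and,
      Finset.subset_iff, Finset.mem_filter, Finset.mem_univ]
    tauto
  rw [hEq, Finset.card_powersetCard]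
  congr 1
  have h2 : Finset.univ.filter (fun x : Fin 7 => (x, y) ∉ E)
      = Finset.univ \ Finset.univ.filter (fun x : Fin 7 => (x, y) ∈ E) := by
    rw [← Finset.filter_not]
  rw [h2, Finset.card_sdiff_of_subset (Finset.filter_subset _ _)]
  simp [dY]

lemma choose_aux : ∀ k, k ≤ 7 → 11 ≤ Nat.choose (7 - k) 5 + 5 * k := by
  intro k hk
  interval_cases k <;> decide

set_option maxHeartbeats 1600000 in
theorem stmt_17 (E : Finset (Fin 7 × Fin 30))
    (hK : ¬ bContains 2 2 E) (hΔ : bMaxDegX E = 7)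
    (hB : (Finset.univ.filter (fun x : Fin 7 => bDeg E x = 7)).card = 2) :
    bContains 5 5 (bCompl E) := by

  have hdeg7 : ∀ x : Fin 7, bDeg E x ≤ 7 := by
    intro x
    have h : bDeg E x ≤ bMaxDegX E := Finset.le_sup (Finset.mem_univ x)
    rw [hΔ] at h
    exact h
  -- sum of X-degrees ≤ 44
  have hsumx : ∑ x : Fin 7, bDeg E x ≤ 44 := by
    have hsplit := Finset.sum_filter_add_sum_filter_not (Finset.univ : Finset (Fin 7))
      (fun x => bDeg E x = 7) (fun x => bDeg E x)
    have h1 : ∑ x ∈ Finset.univ.filter (fun x : Fin 7 => bDeg E x = 7), bDeg E x = 14 := by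
      rw [Finset.sum_congr rfl (fun x hx => (Finset.mem_filter.1 hx).2)]
      simp [hB, Finset.sum_const]
    have h2 : ∑ x ∈ Finset.univ.filter (fun x : Fin 7 => ¬ bDeg E x = 7), bDeg E x ≤ 30 := by
      have hc : (Finset.univ.filter (fun x : Fin 7 => ¬ bDeg E x = 7)).card = 5 := by
        have := Finset.card_filter_add_card_filter_not (s := (Finset.univ : Finset (Fin 7)))
          (p := fun x => bDeg E x = 7)
        simp only [Finset.card_univ, Fintype.card_fin] at this
        omega
      calc ∑ x ∈ Finset.univ.filter (fun x : Fin 7 => ¬ bDeg E x = 7), bDeg E x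
          ≤ ∑ _x ∈ Finset.univ.filter (fun x : Fin 7 => ¬ bDeg E x = 7), 6 := by
            refine Finset.sum_le_sum fun x hx => ?_
            have := hdeg7 x
            have := (Finset.mem_filter.1 hx).2
            omega
        _ = 30 := by simp [Finset.sum_const, hc]
    omega
  -- sum of Y-degrees equals sum of X-degrees
  have hsumd : ∑ y : Fin 30, dY E y = ∑ x : Fin 7, bDeg E x := by
    simp only [dY, bDeg, bNbhd, Finset.card_filter]
    exact Finset.sum_comm
  have hdy : ∀ y, dY E y ≤ 7 := fun y => by
    simpa [dY] using Finset.card_filter_le (Finset.univ : Finset (Fin 7)) (fun x => (x, y) ∈ E)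
  have key : ∀ y, 11 ≤ Nat.choose (7 - dY E y) 5 + 5 * dY E y := fun y => choose_aux (dY E y) (hdy y)
  have hsum : 110 ≤ ∑ y : Fin 30, Nat.choose (7 - dY E y) 5 := by
    have h1 : ∑ _y : Fin 30, 11 ≤ ∑ y : Fin 30, (Nat.choose (7 - dY E y) 5 + 5 * dY E y) :=
      Finset.sum_le_sum fun y _ => key y
    rw [Finset.sum_add_distrib, ← Finset.mul_sum] at h1
    simp only [Finset.sum_const, Finset.card_univ, Fintype.card_fin, smul_eq_mul] at h1
    omega
  -- count: choose (7 - dY E y) 5 = number of 5-subsets avoided by y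
  have hcount : ∀ y : Fin 30, Nat.choose (7 - dY E y) 5 =
      ((Finset.univ.powersetCard 5).filter
        (fun S : Finset (Fin 7) => ∀ x ∈ S, (x, y) ∉ E)).card := fun y => hcount_aux E y
  -- double counting
  have hT : 110 ≤ ∑ S ∈ (Finset.univ : Finset (Fin 7)).powersetCard 5,
      (Finset.univ.filter (fun y : Fin 30 => ∀ x ∈ S, (x, y) ∉ E)).card := by
    have heq : ∑ S ∈ (Finset.univ : Finset (Fin 7)).powersetCard 5,
        (Finset.univ.filter (fun y : Fin 30 => ∀ x ∈ S, (x, y) ∉ E)).card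
        = ∑ y : Fin 30, ((Finset.univ.powersetCard 5).filter
            (fun S : Finset (Fin 7) => ∀ x ∈ S, (x, y) ∉ E)).card := by
      simp only [Finset.card_filter]
      exact Finset.sum_comm
    rw [heq]
    calc 110 ≤ ∑ y : Fin 30, Nat.choose (7 - dY E y) 5 := hsum
      _ = _ := Finset.sum_congr rfl fun y _ => hcount y
  -- pigeonhole
  have hScard : ((Finset.univ : Finset (Fin 7)).powersetCard 5).card = 21 := by
    rw [Finset.card_powersetCard]; simp; rfl
  obtain ⟨S, hSmem, hS5⟩ : ∃ S ∈ (Finset.univ : Finset (Fin 7)).powersetCard 5,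
      5 ≤ (Finset.univ.filter (fun y : Fin 30 => ∀ x ∈ S, (x, y) ∉ E)).card := by
    by_contra hcon
    push_neg at hcon
    have : ∑ S ∈ (Finset.univ : Finset (Fin 7)).powersetCard 5,
        (Finset.univ.filter (fun y : Fin 30 => ∀ x ∈ S, (x, y) ∉ E)).card ≤ 21 * 4 := by
      calc _ ≤ ∑ _S ∈ (Finset.univ : Finset (Fin 7)).powersetCard 5, 4 :=
            Finset.sum_le_sum fun S hS => by have := hcon S hS; omega
        _ = 21 * 4 := by rw [Finset.sum_const, hScard]; ring
    omega
  obtain ⟨B, hBsub, hB5⟩ := Finset.exists_subset_card_eq hS5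
  refine ⟨S, B, (Finset.mem_powersetCard.1 hSmem).2, hB5, fun x hx y hy => ?_⟩
  have hy' := (Finset.mem_filter.1 (hBsub hy)).2 x hx
  simp [bCompl, hy']
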